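/- Let N ≥ 1 and q ≥ 1 be integers. Let T₁, …, T_q : X → X be nonexpansive maps with respect to ‖·‖_{2,2} with ⋂_{r=1}^q fix(T_r) = C, and assume 𝒜 ∩ C ≠ ∅. Let W₁, …, W_q be N×N doubly stochastic matrices with strictly positive diagonal entries such that the edge set {(i,j) | (W_q ⬝ W_{q−1} ⬝ ⋯ ⬝ W₁)_{ij} > 0} of the matrix product is strongly connected on Fin N. Let 𝑾_r denote the averaging map of W_r on X. Then ⋂_{r=1}^q fix(T_r ∘ 𝑾_r) = 𝒜 ∩ C. -/

import Mathlib

open scoped BigOperators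

noncomputable section

/-- The stacked space `X = Fin N → EuclideanSpace ℝ (Fin N)` with the ℓ²-product norm. -/
abbrev XSp (N : ℕ) := PiLp 2 (fun _ : Fin N => EuclideanSpace ℝ (Fin N))

/-- The core of a TU coalitional game with value function `v`. -/
def core {N : ℕ} (v : Finset (Fin N) → ℝ) : Set (EuclideanSpace ℝ (Fin N)) :=
  {x | ∑ i, x i = v Finset.univ ∧
    ∀ S : Finset (Fin N), S.Nonempty → ∑ i ∈ S, x i ≥ v S}

/-- A matrix is doubly stochastic: nonnegative entries, rows and columns sum to 1. -/
def DoublyStochastic {N : ℕ} (W : Matrix (Fin N) (Fin N) ℝ) : Prop :=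
  (∀ i j, 0 ≤ W i j) ∧ (∀ i, ∑ j, W i j = 1) ∧ (∀ j, ∑ i, W i j = 1)

/-- The averaging map `(𝑾 x)_i = ∑ j, W i j • x j` (Kronecker product `W ⊗ I`). -/
def avgMap {N n : ℕ} (W : Matrix (Fin N) (Fin N) ℝ)
    (x : PiLp 2 fun _ : Fin N => EuclideanSpace ℝ (Fin n)) :
    PiLp 2 fun _ : Fin N => EuclideanSpace ℝ (Fin n) :=
  WithLp.toLp 2 fun i => ∑ j, W i j • x j

/-- An edge set on `Fin N` is strongly connected. -/
def StronglyConnected {N : ℕ} (E : Set (Fin N × Fin N)) : Prop :=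
  ∀ i j : Fin N, Relation.ReflTransGen (fun a b => (a, b) ∈ E) i j

/-- A map is nonexpansive (1-Lipschitz). -/
def Nonexpansive {E : Type*} [NormedAddCommGroup E] (T : E → E) : Prop :=
  ∀ x y, ‖T x - T y‖ ≤ ‖x - y‖

/-- A continuous map `M` is a paracontraction if `‖M x - y‖ < ‖x - y‖` whenever
`x` is not a fixed point of `M` and `y` is a fixed point of `M`. -/
def Paracontraction {E : Type*} [NormedAddCommGroup E] (M : E → E) : Prop :=
  Continuous M ∧ ∀ x y, M x ≠ x → M y = y → ‖M x - y‖ < ‖x - y‖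

/-- Auxiliary energy identity for a doubly stochastic averaging step. -/
lemma avg_key {N n : ℕ} (W : Matrix (Fin N) (Fin N) ℝ) (hW : DoublyStochastic W)
    (v : Fin N → EuclideanSpace ℝ (Fin n)) :
    ∑ i, ∑ j, W i j * ‖v j - ∑ k, W i k • v k‖ ^ 2
      = ∑ j, ‖v j‖ ^ 2 - ∑ i, ‖∑ k, W i k • v k‖ ^ 2 := by
  obtain ⟨hpos, hrow, hcol⟩ := hW
  have key : ∀ i, ∑ j, W i j * ‖v j - ∑ k, W i k • v k‖ ^ 2
      = (∑ j, W i j * ‖v j‖ ^ 2) - ‖∑ k, W i k • v k‖ ^ 2 := by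
    intro i
    set w : EuclideanSpace ℝ (Fin n) := ∑ k, W i k • v k with hw
    have hinner : ∑ j, W i j * (inner ℝ (v j) w : ℝ) = ‖w‖ ^ 2 := by
      rw [← real_inner_self_eq_norm_sq w]
      rw [hw, sum_inner]
      exact Finset.sum_congr rfl fun j _ => (real_inner_smul_left (v j) w (W i j)).symm
    have expand : ∀ j, W i j * ‖v j - w‖ ^ 2
        = W i j * ‖v j‖ ^ 2 - 2 * (W i j * (inner ℝ (v j) w : ℝ)) + W i j * ‖w‖ ^ 2 := by
      intro j; rw [norm_sub_sq_real]; ring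
    rw [Finset.sum_congr rfl fun j _ => expand j]
    rw [Finset.sum_add_distrib, Finset.sum_sub_distrib, ← Finset.mul_sum, hinner,
      ← Finset.sum_mul, hrow, one_mul]
    ring
  rw [Finset.sum_congr rfl fun i _ => key i, Finset.sum_sub_distrib,
    Finset.sum_comm]
  congr 1
  refine Finset.sum_congr rfl fun j _ => ?_
  rw [← Finset.sum_mul, hcol, one_mul]

/-- Nonexpansiveness of the averaging step at the level of squared sums. -/
lemma avg_sq_le {N n : ℕ} (W : Matrix (Fin N) (Fin N) ℝ) (hW : DoublyStochastic W)
    (v : Fin N → EuclideanSpace ℝ (Fin n)) :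
    ∑ i, ‖∑ k, W i k • v k‖ ^ 2 ≤ ∑ j, ‖v j‖ ^ 2 := by
  have h := avg_key W hW v
  have hnn : 0 ≤ ∑ i, ∑ j, W i j * ‖v j - ∑ k, W i k • v k‖ ^ 2 :=
    Finset.sum_nonneg fun i _ => Finset.sum_nonneg fun j _ =>
      mul_nonneg (hW.1 i j) (sq_nonneg _)
  linarith

/-- Equality case of the averaging inequality. -/
lemma avg_eq_case {N n : ℕ} (W : Matrix (Fin N) (Fin N) ℝ) (hW : DoublyStochastic W)
    (v : Fin N → EuclideanSpace ℝ (Fin n))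
    (heq : ∑ i, ‖∑ k, W i k • v k‖ ^ 2 = ∑ j, ‖v j‖ ^ 2) :
    ∀ i j, 0 < W i j → v j = ∑ k, W i k • v k := by
  have h := avg_key W hW v
  rw [heq, sub_self] at h
  intro i j hij
  have hterm : ∀ i ∈ Finset.univ, (0:ℝ) ≤ ∑ j, W i j * ‖v j - ∑ k, W i k • v k‖ ^ 2 :=
    fun i _ => Finset.sum_nonneg fun j _ => mul_nonneg (hW.1 i j) (sq_nonneg _)
  have h1 := (Finset.sum_eq_zero_iff_of_nonneg hterm).mp h i (Finset.mem_univ i)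
  have h2 := (Finset.sum_eq_zero_iff_of_nonneg
    (fun j _ => mul_nonneg (hW.1 i j) (sq_nonneg _))).mp h1 j (Finset.mem_univ j)
  have h3 : ‖v j - ∑ k, W i k • v k‖ ^ 2 = 0 := by
    rcases mul_eq_zero.mp h2 with h | h
    · exact absurd h (ne_of_gt hij)
    · exact h
  have h4 := pow_eq_zero_iff (n := 2) (by norm_num) |>.mp h3
  rwa [norm_eq_zero, sub_eq_zero] at h4

/-- Positivity of entries of a product of nonnegative matrices forces a chain. -/
lemma prod_pos_prop {N n : ℕ} (x : Fin N → EuclideanSpace ℝ (Fin n))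
    (L : List (Matrix (Fin N) (Fin N) ℝ))
    (hL : ∀ M ∈ L, (∀ i j, 0 ≤ M i j) ∧ (∀ i j, 0 < M i j → x j = x i)) :
    (∀ i j, 0 ≤ L.prod i j) ∧ (∀ i j, 0 < L.prod i j → x j = x i) := by
  induction L with
  | nil =>
    simp only [List.prod_nil]
    constructor
    · intro i j; rw [Matrix.one_apply]; split <;> norm_num
    · intro i j h; rw [Matrix.one_apply] at h
      by_cases hij : i = j
      · rw [hij]
      · simp [hij] at h
  | cons A l ih =>
    have hA := hL A List.mem_cons_self
    have hl := ih fun M hM => hL M (List.mem_cons_of_mem A hM)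
    rw [List.prod_cons]
    constructor
    · intro i j
      rw [Matrix.mul_apply]
      exact Finset.sum_nonneg fun k _ => mul_nonneg (hA.1 i k) (hl.1 k j)
    · intro i j h
      rw [Matrix.mul_apply] at h
      have hex : ∃ k, 0 < A i k * l.prod k j := by
        by_contra hcon
        push_neg at hcon
        rw [Finset.sum_eq_zero (fun k _ =>
          le_antisymm (hcon k) (mul_nonneg (hA.1 i k) (hl.1 k j)))] at h
        exact lt_irrefl 0 h
      obtain ⟨k, hk⟩ := hex
      have h1 : 0 < A i k := lt_of_le_of_ne (hA.1 i k)
        (fun h0 => by rw [← h0, zero_mul] at hk; exact lt_irrefl 0 hk)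
      have h2 : 0 < l.prod k j := lt_of_le_of_ne (hl.1 k j)
        (fun h0 => by rw [← h0, mul_zero] at hk; exact lt_irrefl 0 hk)
      exact (hl.2 k j h2).trans (hA.2 i k h1)

/-- Averaging fixes consensus points. -/
lemma avgMap_fixes_consensus {N n : ℕ} (W : Matrix (Fin N) (Fin N) ℝ)
    (hrow : ∀ i, ∑ j, W i j = 1)
    (x : PiLp 2 fun _ : Fin N => EuclideanSpace ℝ (Fin n))
    (hx : ∀ i j, x i = x j) : avgMap W x = x := by
  refine PiLp.ext fun i => ?_
  show ∑ j, W i j • x j = x i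
  calc ∑ j, W i j • x j = ∑ j, W i j • x i :=
        Finset.sum_congr rfl fun j _ => by rw [hx j i]
    _ = (∑ j, W i j) • x i := by rw [Finset.sum_smul]
    _ = x i := by rw [hrow, one_smul]

/-- Lemma 5: fixed points of the composed maps `T_r ∘ 𝑾_r` intersect exactly in
the consensus set intersected with the common fixed-point set `C`. -/
theorem fixedPoints_T_comp_avg
    (N q : ℕ) (hN : 1 ≤ N) (hq : 1 ≤ q)
    (T : Fin q → (XSp N → XSp N)) (hT : ∀ r, Nonexpansive (T r))
    (C : Set (XSp N)) (hC : (⋂ r, Function.fixedPoints (T r)) = C)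
    (𝒜 : Set (XSp N)) (h𝒜 : 𝒜 = {x : XSp N | ∀ i j, x i = x j})
    (hne : (𝒜 ∩ C).Nonempty)
    (W : Fin q → Matrix (Fin N) (Fin N) ℝ)
    (hW : ∀ r, DoublyStochastic (W r) ∧ ∀ i, 0 < W r i i)
    (hconn : StronglyConnected {p : Fin N × Fin N |
      0 < ((List.ofFn fun r : Fin q => W (Fin.rev r)).prod) p.1 p.2}) :
    (⋂ r, Function.fixedPoints (T r ∘ avgMap (W r))) = 𝒜 ∩ C := by
  obtain ⟨y, hyA, hyC⟩ := hne
  have hyA' : ∀ i j, y i = y j := by rw [h𝒜] at hyA; exact hyA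
  have hyfix : ∀ r, T r y = y := by
    intro r
    rw [← hC] at hyC
    exact Set.mem_iInter.mp hyC r
  have havgy : ∀ r, avgMap (W r) y = y := fun r =>
    avgMap_fixes_consensus (W r) (hW r).1.2.1 y hyA'
  ext x
  simp only [Set.mem_iInter, Function.mem_fixedPoints, Function.IsFixedPt,
    Function.comp_apply, Set.mem_inter_iff]
  constructor
  · intro hfix
    -- key pointwise consensus property along positive entries
    have hstep : ∀ r i j, 0 < W r i j → x j = x i := by
      intro r
      set v : Fin N → EuclideanSpace ℝ (Fin N) := fun j => x j - y j with hv
      have hsub : ∀ i, (avgMap (W r) x - y) i = ∑ k, W r i k • v k := by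
        intro i
        show avgMap (W r) x i - y i = _
        conv_lhs => rw [← havgy r]
        show (∑ k, W r i k • x k) - (∑ k, W r i k • y k) = _
        rw [← Finset.sum_sub_distrib]
        exact Finset.sum_congr rfl fun k _ => (smul_sub _ _ _).symm
      have hA : ‖avgMap (W r) x - y‖ ^ 2 = ∑ i, ‖∑ k, W r i k • v k‖ ^ 2 := by
        rw [PiLp.norm_sq_eq_of_L2]
        exact Finset.sum_congr rfl fun i _ => by rw [hsub i]
      have hS : ‖x - y‖ ^ 2 = ∑ j, ‖v j‖ ^ 2 := by
        rw [PiLp.norm_sq_eq_of_L2]; rfl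
      have hle1 : ‖x - y‖ ≤ ‖avgMap (W r) x - y‖ := by
        calc ‖x - y‖ = ‖T r (avgMap (W r) x) - T r (avgMap (W r) y)‖ := by
              rw [hfix r, havgy r, hyfix r]
          _ ≤ ‖avgMap (W r) x - avgMap (W r) y‖ := hT r _ _
          _ = ‖avgMap (W r) x - y‖ := by rw [havgy r]
      have hle1' : ‖x - y‖ ^ 2 ≤ ‖avgMap (W r) x - y‖ ^ 2 :=
        pow_le_pow_left₀ (norm_nonneg _) hle1 2
      have hle2 : ∑ i, ‖∑ k, W r i k • v k‖ ^ 2 ≤ ∑ j, ‖v j‖ ^ 2 :=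
        avg_sq_le (W r) (hW r).1 v
      have heq : ∑ i, ‖∑ k, W r i k • v k‖ ^ 2 = ∑ j, ‖v j‖ ^ 2 := by
        rw [hA, hS] at hle1'; linarith
      have hcase := avg_eq_case (W r) (hW r).1 v heq
      intro i j hij
      have h1 : v j = ∑ k, W r i k • v k := hcase i j hij
      have h2 : v i = ∑ k, W r i k • v k := hcase i i ((hW r).2 i)
      have h3 : v j = v i := h1.trans h2.symm
      have h4 : x j - y j = x i - y i := h3
      have h5 : y j = y i := hyA' j i
      rw [h5] at h4
      exact sub_left_injective h4
    -- x is fixed by each averaging map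
    have havgx : ∀ r, avgMap (W r) x = x := by
      intro r
      refine PiLp.ext fun i => ?_
      show ∑ j, W r i j • x j = x i
      calc ∑ j, W r i j • x j = ∑ j, W r i j • x i := by
            refine Finset.sum_congr rfl fun j _ => ?_
            rcases lt_or_eq_of_le ((hW r).1.1 i j) with h | h
            · rw [hstep r i j h]
            · rw [← h, zero_smul, zero_smul]
        _ = (∑ j, W r i j) • x i := by rw [Finset.sum_smul]
        _ = x i := by rw [(hW r).1.2.1 i, one_smul]
    have hxC : x ∈ C := by
      rw [← hC]
      refine Set.mem_iInter.mpr fun r => ?_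
      show T r x = x
      conv_lhs => rw [← havgx r]
      exact hfix r
    refine ⟨?_, hxC⟩
    -- consensus via strong connectivity of the product
    have hprod := prod_pos_prop x (List.ofFn fun r : Fin q => W (Fin.rev r)) ?_
    · rw [h𝒜]
      intro i j
      have key : ∀ a b : Fin N, Relation.ReflTransGen (fun a b => (a, b) ∈
          {p : Fin N × Fin N |
            0 < ((List.ofFn fun r : Fin q => W (Fin.rev r)).prod) p.1 p.2}) a b →
          x b = x a := by
        intro a b h
        induction h with
        | refl => rfl
        | tail h1 h2 ih => exact (hprod.2 _ _ h2).trans ih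
      exact key j i (hconn j i)
    · intro M hM
      obtain ⟨r, hr⟩ := List.mem_ofFn.mp hM
      subst hr
      exact ⟨(hW _).1.1, fun i j h => hstep _ i j h⟩
  · rintro ⟨hxA, hxC⟩
    intro r
    have hxA' : ∀ i j, x i = x j := by rw [h𝒜] at hxA; exact hxA
    rw [avgMap_fixes_consensus (W r) (hW r).1.2.1 x hxA']
    rw [← hC] at hxC
    exact Set.mem_iInter.mp hxC r
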